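/- In the directed inhomogeneous random graph model with random exposures, conditioned on bank 1 having type t, let f_X^{(N)}(k | t) := E[e^{i k X̄₁}] be the characteristic function of the interbank debt X̄₁ := Σ_{w=2}^N I_{w1} Ω_{w1}, and define f_X(k | t) := exp( Σ_{t'∈[M]} P(t') κ(t',t) ( f_Ω(k | t',t) − 1 ) ). Then there exists a constant C, depending only on M, P and κ (not on N, k or t), such that for all N ≥ 2 with max_{s,s'} κ(s,s') ≤ N−1, all k ∈ ℝ and all t ∈ [M]: | f_X^{(N)}(k | t) − f_X(k | t) | ≤ C/(N−1). -/

import Mathlib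

open MeasureTheory ProbabilityTheory Complex


open MeasureTheory ProbabilityTheory

/-- The uniform distribution on `[0,1]`. -/
noncomputable def unif01 : Measure ℝ := volume.restrict (Set.Icc (0:ℝ) 1)

/-- The law of a bank type: the discrete measure on `[M]` with mass function `P`. -/
noncomputable def typeMeasure (M : ℕ) (P : Fin M → ℝ) : Measure (Fin M) :=
  ∑ s, ENNReal.ofReal (P s) • Measure.dirac s

/-- The joint law of one triple `(T_w, U_w, Ω_{w1})`: first draw the type `s ~ P`, then,
conditionally on `s`, draw `U_w ~ Uniform[0,1]` and `Ω_{w1} ~ ν(·∣s,t)` independently. -/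
noncomputable def coordLaw (M : ℕ) (P : Fin M → ℝ) (ν : Fin M → Fin M → Measure ℝ)
    (t : Fin M) : Measure (Fin M × ℝ × ℝ) :=
  (typeMeasure M P).bind
    (fun s => Measure.map (fun p : ℝ × ℝ => (s, p)) (unif01.prod (ν s t)))

lemma aux_pow_sub (a b : ℂ) (ha : ‖a‖ ≤ 1) (hb : ‖b‖ ≤ 1) :
    ∀ n : ℕ, ‖a ^ n - b ^ n‖ ≤ n * ‖a - b‖ := by
  intro n
  induction n with
  | zero => simp
  | succ n ih =>
    have h : a ^ (n+1) - b ^ (n+1) = a * (a ^ n - b ^ n) + (a - b) * b ^ n := by ring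
    rw [h]
    calc ‖_‖ ≤ ‖a * (a ^ n - b ^ n)‖ + ‖(a - b) * b ^ n‖ :=
          norm_add_le _ _
      _ ≤ 1 * (n * ‖a - b‖) + ‖a - b‖ * 1 := by
          rw [norm_mul, norm_mul]
          exact add_le_add
            (mul_le_mul ha ih (norm_nonneg _) zero_le_one)
            (mul_le_mul le_rfl (by simpa using pow_le_one₀ (norm_nonneg b) hb)
              (norm_nonneg _) (norm_nonneg _))
      _ = (n + 1 : ℕ) * ‖a - b‖ := by push_cast; ring

instance unif01_prob : IsProbabilityMeasure unif01 :=
  ⟨by simp [unif01, Real.volume_Icc]⟩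

lemma coordLaw_eq (M : ℕ) (P : Fin M → ℝ) (ν : Fin M → Fin M → Measure ℝ) (t : Fin M) :
    coordLaw M P ν t = ∑ s, ENNReal.ofReal (P s) •
      Measure.map (fun p : ℝ × ℝ => (s, p)) (unif01.prod (ν s t)) := by
  have hmeas : Measurable fun s : Fin M =>
      Measure.map (fun p : ℝ × ℝ => (s, p)) (unif01.prod (ν s t)) :=
    measurable_of_countable _
  ext A hA
  rw [coordLaw, Measure.bind_apply hA hmeas.aemeasurable, typeMeasure,
    lintegral_finset_sum_measure]
  simp only [lintegral_smul_measure, lintegral_dirac]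
  rw [Measure.finset_sum_apply]
  simp [Measure.smul_apply]

lemma integrable_of_bdd {α : Type*} [MeasurableSpace α] (μ : Measure α) [IsFiniteMeasure μ]
    {g : α → ℂ} (hg : Measurable g) (hb : ∀ q, ‖g q‖ ≤ 1) : Integrable g μ :=
  Integrable.mono' (integrable_const 1) hg.aestronglyMeasurable
    (Filter.Eventually.of_forall hb)

example (M : ℕ) (P : Fin M → ℝ) (hP0 : ∀ s, 0 ≤ P s) (hP1 : ∑ s, P s = 1)
    (ν : Fin M → Fin M → Measure ℝ) (hν : ∀ s s', IsProbabilityMeasure (ν s s'))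
    (t : Fin M) : IsProbabilityMeasure (coordLaw M P ν t) := by
  constructor
  rw [coordLaw_eq, Measure.finset_sum_apply]
  haveI := fun s => hν s t
  simp only [Measure.smul_apply, Measure.map_apply measurable_prodMk_left MeasurableSet.univ,
    Set.preimage_univ, measure_univ, smul_eq_mul, mul_one]
  rw [← ENNReal.ofReal_sum_of_nonneg (fun s _ => hP0 s), hP1, ENNReal.ofReal_one]

lemma inner_meas (p : ℝ) (k : ℝ) :
    Measurable fun q : ℝ × ℝ => Complex.exp (Complex.I * (k:ℂ) *
      (((if q.1 ≤ p then (1:ℝ) else 0) * q.2 : ℝ) : ℂ)) := by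
  apply Complex.measurable_exp.comp
  apply Measurable.const_mul
  apply Complex.measurable_ofReal.comp
  exact (Measurable.ite (measurableSet_le measurable_fst measurable_const)
    measurable_const measurable_const).mul measurable_snd

lemma norm_exp_mul_I (k r : ℝ) :
    ‖Complex.exp (Complex.I * (k:ℂ) * (r : ℂ))‖ = 1 := by
  simp [Complex.norm_exp, Complex.mul_re, Complex.mul_im]

lemma integral_g_prod (p k : ℝ) (hp0 : 0 ≤ p) (hp1 : p ≤ 1)
    (m : Measure ℝ) [IsProbabilityMeasure m] :
    ∫ q : ℝ × ℝ, Complex.exp (Complex.I * (k:ℂ) *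
        (((if q.1 ≤ p then (1:ℝ) else 0) * q.2 : ℝ) : ℂ)) ∂(unif01.prod m)
      = 1 + (p : ℂ) * ((∫ x, Complex.exp (Complex.I * (k:ℂ) * (x:ℂ)) ∂m) - 1) := by
  rw [integral_prod _ (integrable_of_bdd _ (inner_meas p k)
    (fun q => le_of_eq (norm_exp_mul_I _ _)))]
  have hin : ∀ u : ℝ, (∫ x, Complex.exp (Complex.I * (k:ℂ) *
      (((if u ≤ p then (1:ℝ) else 0) * x : ℝ) : ℂ)) ∂m)
      = if u ≤ p then (∫ x, Complex.exp (Complex.I * (k:ℂ) * (x:ℂ)) ∂m) else 1 := by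
    intro u
    by_cases h : u ≤ p <;> simp [h]
  simp_rw [hin]
  have heq : (fun u => if u ≤ p then (∫ x, Complex.exp (Complex.I * (k:ℂ) * (x:ℂ)) ∂m) else 1)
      = fun u => Set.indicator (Set.Iic p)
          (fun _ => (∫ x, Complex.exp (Complex.I * (k:ℂ) * (x:ℂ)) ∂m) - 1) u + 1 := by
    funext u
    by_cases h : u ≤ p <;> simp [Set.indicator, h]
  rw [heq, integral_add ((integrable_const _).indicator measurableSet_Iic) (integrable_const _),
    integral_indicator_const _ measurableSet_Iic, integral_const]
  have hmeasIic : unif01 (Set.Iic p) = ENNReal.ofReal p := by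
    rw [unif01, Measure.restrict_apply measurableSet_Iic]
    have : Set.Iic p ∩ Set.Icc (0:ℝ) 1 = Set.Icc 0 p := by
      ext x
      simp only [Set.mem_inter_iff, Set.mem_Iic, Set.mem_Icc]
      constructor
      · rintro ⟨h1, h2, _⟩; exact ⟨h2, h1⟩
      · rintro ⟨h1, h2⟩; exact ⟨h2, h1, le_trans h2 hp1⟩
    rw [this, Real.volume_Icc]
    simp
  rw [measureReal_def, hmeasIic]
  simp [ENNReal.toReal_ofReal hp0]
  ring

lemma integral_coordLaw (M : ℕ) (P : Fin M → ℝ) (hP0 : ∀ s, 0 ≤ P s)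
    (ν : Fin M → Fin M → Measure ℝ) (hν : ∀ s s', IsProbabilityMeasure (ν s s'))
    (t : Fin M) {g : Fin M × ℝ × ℝ → ℂ} (hg : Measurable g) (hb : ∀ q, ‖g q‖ ≤ 1) :
    ∫ q, g q ∂(coordLaw M P ν t)
      = ∑ s, (P s : ℂ) * ∫ p : ℝ × ℝ, g (s, p) ∂(unif01.prod (ν s t)) := by
  haveI := fun s => hν s t
  rw [coordLaw_eq, integral_finset_sum_measure (fun s _ =>
    (integrable_of_bdd _ hg hb).smul_measure ENNReal.ofReal_ne_top)]
  congr 1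
  funext s
  rw [integral_smul_measure, integral_map measurable_prodMk_left.aemeasurable
    hg.aestronglyMeasurable]
  rw [ENNReal.toReal_ofReal (hP0 s)]
  simp

set_option synthInstance.maxHeartbeats 1000000 in
lemma step1 (M : ℕ) (P : Fin M → ℝ) (hP0 : ∀ s, 0 ≤ P s) (hP1 : ∑ s, P s = 1)
    (ν : Fin M → Fin M → Measure ℝ) (hν : ∀ s s', IsProbabilityMeasure (ν s s'))
    (t : Fin M) (n : ℕ)
    (Ω : Type) (mΩ : MeasurableSpace Ω) (μ : Measure Ω)
    (Φ : Ω → (Fin n → Fin M × ℝ × ℝ))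
    (hmap : Measure.map Φ μ = Measure.pi (fun _ : Fin n => coordLaw M P ν t))
    {g : Fin M × ℝ × ℝ → ℂ} (hg : Measurable g) (hb : ∀ q, ‖g q‖ ≤ 1) :
    ∫ ω, ∏ w : Fin n, g (Φ ω w) ∂μ = (∫ q, g q ∂(coordLaw M P ν t)) ^ n := by
  haveI hcl : IsProbabilityMeasure (coordLaw M P ν t) := by
    constructor
    rw [coordLaw_eq, Measure.finset_sum_apply]
    haveI := fun s => hν s t
    simp only [Measure.smul_apply, Measure.map_apply measurable_prodMk_left MeasurableSet.univ,
      Set.preimage_univ, measure_univ, smul_eq_mul, mul_one]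
    rw [← ENNReal.ofReal_sum_of_nonneg (fun s _ => hP0 s), hP1, ENNReal.ofReal_one]
  have hΦ : AEMeasurable Φ μ := by
    by_contra h
    have h1 : (Measure.pi (fun _ : Fin n => coordLaw M P ν t)) Set.univ = 1 := measure_univ
    rw [← hmap, Measure.map_of_not_aemeasurable h] at h1
    simp at h1
  have hF : Measurable fun y : Fin n → Fin M × ℝ × ℝ => ∏ w, g (y w) :=
    Finset.measurable_prod _ fun w _ => hg.comp (measurable_pi_apply w)
  have := integral_map (f := fun y : Fin n → Fin M × ℝ × ℝ => ∏ w, g (y w)) hΦ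
    hF.aestronglyMeasurable
  rw [hmap] at this
  rw [← this]
  letI : MeasureSpace (Fin M × ℝ × ℝ) := ⟨coordLaw M P ν t⟩
  haveI : IsProbabilityMeasure (volume : Measure (Fin M × ℝ × ℝ)) := hcl
  haveI : SigmaFinite (volume : Measure (Fin M × ℝ × ℝ)) := inferInstance
  have hvol : Measure.pi (fun _ : Fin n => coordLaw M P ν t)
      = (volume : Measure (Fin n → Fin M × ℝ × ℝ)) := rfl
  rw [hvol]
  have := MeasureTheory.integral_fintype_prod_eq_pow (ι := Fin n) g (μ := coordLaw M P ν t)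
  rw [Fintype.card_fin] at this
  exact this


lemma analytic (M : ℕ) (P : Fin M → ℝ) (hP0 : ∀ s, 0 ≤ P s) (hP1 : ∑ s, P s = 1)
    (κ : Fin M → Fin M → ℝ) (hκ0 : ∀ s s', 0 ≤ κ s s') (t : Fin M)
    (n : ℕ) (hn : 1 ≤ n) (hκN : ∀ s s', κ s s' ≤ (n:ℝ))
    (f : Fin M → ℂ) (hf : ∀ s, ‖f s‖ ≤ 1) :
    ‖(∑ s, (P s : ℂ) * (1 + ((κ s t / (n:ℝ) : ℝ) : ℂ) * (f s - 1))) ^ n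
        - Complex.exp (∑ s, (P s : ℂ) * (κ s t : ℂ) * (f s - 1))‖
      ≤ (4 * (∑ s, ∑ s', κ s s')^2 + 4 * (∑ s, ∑ s', κ s s') + 2) / (n:ℝ) := by
  set K : ℝ := ∑ s, ∑ s', κ s s' with hK
  have hK0 : 0 ≤ K := Finset.sum_nonneg fun s _ => Finset.sum_nonneg fun s' _ => hκ0 s s'
  have hKt : ∑ s, κ s t ≤ K :=
    Finset.sum_le_sum fun s _ => Finset.single_le_sum (fun s' _ => hκ0 s s') (Finset.mem_univ t)
  have hn0 : (0:ℝ) < (n:ℝ) := by exact_mod_cast hn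
  set q : Fin M → ℝ := fun s => κ s t / (n:ℝ) with hqdef
  have hq0 : ∀ s, 0 ≤ q s := fun s => div_nonneg (hκ0 s t) hn0.le
  have hq1 : ∀ s, q s ≤ 1 := fun s => (div_le_one hn0).2 (hκN s t)
  set z : ℂ := ∑ s, (P s : ℂ) * (1 + ((q s : ℝ) : ℂ) * (f s - 1)) with hzdef
  have hm : ∀ s, ‖1 + ((q s : ℝ) : ℂ) * (f s - 1)‖ ≤ 1 := by
    intro s
    have h1 : (1 : ℂ) + (q s : ℂ) * (f s - 1) = ((1 - q s : ℝ) : ℂ) + (q s : ℂ) * f s := by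
      push_cast; ring
    rw [h1]
    calc ‖_‖ ≤ ‖((1 - q s : ℝ) : ℂ)‖ + ‖(q s : ℂ) * f s‖ :=
          norm_add_le _ _
      _ ≤ (1 - q s) + q s * 1 := by
          rw [norm_mul, Complex.norm_real, Complex.norm_real, Real.norm_eq_abs, Real.norm_eq_abs,
            _root_.abs_of_nonneg (by linarith [hq1 s] : (0:ℝ) ≤ 1 - q s),
            _root_.abs_of_nonneg (hq0 s)]
          exact add_le_add le_rfl (mul_le_mul_of_nonneg_left (hf s) (hq0 s))
      _ = 1 := by ring
  have hz1 : ‖z‖ ≤ 1 := by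
    calc ‖z‖ ≤ ∑ s, ‖(P s : ℂ) * (1 + ((q s : ℝ) : ℂ) * (f s - 1))‖ :=
          norm_sum_le _ _
      _ ≤ ∑ s, P s * 1 := by
          apply Finset.sum_le_sum
          intro s _
          rw [norm_mul, Complex.norm_real, Real.norm_eq_abs, _root_.abs_of_nonneg (hP0 s)]
          exact mul_le_mul_of_nonneg_left (hm s) (hP0 s)
      _ = 1 := by simp [hP1]
  have hzsub : z - 1 = ∑ s, (P s : ℂ) * ((q s : ℂ) * (f s - 1)) := by
    have hPc : (∑ s, (P s : ℂ)) = 1 := by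
      rw [← Complex.ofReal_sum, hP1, Complex.ofReal_one]
    calc z - 1 = (∑ s, (P s : ℂ) * (1 + ((q s : ℝ) : ℂ) * (f s - 1))) - ∑ s, (P s : ℂ) := by
          rw [hPc]
      _ = ∑ s, ((P s : ℂ) * (1 + ((q s : ℝ) : ℂ) * (f s - 1)) - (P s : ℂ)) := by
          rw [Finset.sum_sub_distrib]
      _ = ∑ s, (P s : ℂ) * ((q s : ℂ) * (f s - 1)) := by
          apply Finset.sum_congr rfl; intro s _; ring
  have hw : ‖z - 1‖ ≤ 2 * K / (n:ℝ) := by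
    rw [hzsub]
    calc ‖_‖ ≤ ∑ s, ‖(P s : ℂ) * ((q s : ℂ) * (f s - 1))‖ :=
          norm_sum_le _ _
      _ ≤ ∑ s, P s * (q s * 2) := by
          apply Finset.sum_le_sum
          intro s _
          rw [norm_mul, norm_mul, Complex.norm_real, Complex.norm_real, Real.norm_eq_abs, Real.norm_eq_abs,
            _root_.abs_of_nonneg (hP0 s), _root_.abs_of_nonneg (hq0 s)]
          have : ‖f s - 1‖ ≤ 2 := by
            have h' : ‖f s - 1‖ ≤ ‖f s‖ + 1 := by
              simpa [sub_eq_add_neg, norm_neg] using norm_add_le (f s) (-1)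
            linarith [hf s]
          exact mul_le_mul_of_nonneg_left
            (mul_le_mul_of_nonneg_left this (hq0 s)) (hP0 s)
      _ ≤ 2 * K / (n:ℝ) := by
          have : ∑ s, P s * (q s * 2) = (2 / (n:ℝ)) * ∑ s, P s * κ s t := by
            rw [Finset.mul_sum]
            apply Finset.sum_congr rfl
            intro s _
            simp only [hqdef]
            field_simp
          rw [this]
          have h2 : ∑ s, P s * κ s t ≤ K := by
            calc ∑ s, P s * κ s t ≤ ∑ s, κ s t := by
                  apply Finset.sum_le_sum
                  intro s _
                  have hP1s : P s ≤ 1 := by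
                    calc P s ≤ ∑ s', P s' :=
                          Finset.single_le_sum (fun s' _ => hP0 s') (Finset.mem_univ s)
                      _ = 1 := hP1
                  nlinarith [hκ0 s t]
              _ ≤ K := hKt
          calc (2 / (n:ℝ)) * ∑ s, P s * κ s t ≤ (2 / (n:ℝ)) * K :=
                mul_le_mul_of_nonneg_left h2 (by positivity)
            _ = 2 * K / (n:ℝ) := by ring
  have hsum_eq : (∑ s, (P s : ℂ) * (κ s t : ℂ) * (f s - 1)) = (n : ℂ) * (z - 1) := by
    rw [hzsub, Finset.mul_sum]
    apply Finset.sum_congr rfl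
    intro s _
    have : ((q s : ℝ) : ℂ) = (κ s t : ℂ) / (n : ℂ) := by
      simp only [hqdef]; push_cast; ring
    rw [this]
    have hn0' : (n : ℂ) ≠ 0 := by exact_mod_cast hn0.ne'
    field_simp
  rw [hsum_eq, Complex.exp_nat_mul]
  have hexple : ‖Complex.exp (z - 1)‖ ≤ 1 := by
    rw [Complex.norm_exp]
    have : (z - 1).re ≤ 0 := by
      have := Complex.re_le_norm z
      simp only [Complex.sub_re, Complex.one_re]
      linarith
    exact Real.exp_le_one_iff.2 this
  by_cases hcase : 2 * K ≤ (n:ℝ)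
  · have hw1 : ‖z - 1‖ ≤ 1 := by
      calc ‖z - 1‖ ≤ 2 * K / (n:ℝ) := hw
        _ ≤ 1 := (div_le_one hn0).2 hcase
    calc ‖z ^ n - Complex.exp (z - 1) ^ n‖
        ≤ n * ‖z - Complex.exp (z - 1)‖ := aux_pow_sub z _ hz1 hexple n
      _ = n * ‖Complex.exp (z - 1) - 1 - (z - 1)‖ := by
          congr 1
          have : z - Complex.exp (z - 1) = -(Complex.exp (z - 1) - 1 - (z - 1)) := by ring
          rw [this, norm_neg]
      _ ≤ n * (‖z - 1‖) ^ 2 := by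
          have := Complex.norm_exp_sub_one_sub_id_le hw1
          exact mul_le_mul_of_nonneg_left this (Nat.cast_nonneg n)
      _ ≤ n * (2 * K / (n:ℝ)) ^ 2 := by
          apply mul_le_mul_of_nonneg_left _ (Nat.cast_nonneg n)
          exact pow_le_pow_left₀ (norm_nonneg _) hw 2
      _ = 4 * K ^ 2 / (n:ℝ) := by field_simp; ring
      _ ≤ (4 * K^2 + 4 * K + 2) / (n:ℝ) := by
          gcongr
          nlinarith
  · have h1 : ‖z ^ n‖ ≤ 1 := by
      rw [norm_pow]; exact pow_le_one₀ (norm_nonneg _) hz1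
    have h2 : ‖Complex.exp (z - 1) ^ n‖ ≤ 1 := by
      rw [norm_pow]; exact pow_le_one₀ (norm_nonneg _) hexple
    have h3 : ‖z ^ n - Complex.exp (z - 1) ^ n‖
        ≤ ‖z ^ n‖ + ‖Complex.exp (z - 1) ^ n‖ := by
      simpa [sub_eq_add_neg, norm_neg] using
        norm_add_le (z ^ n) (-(Complex.exp (z - 1) ^ n))
    have h4 : (n:ℝ) < 2 * K := by linarith [not_le.1 hcase]
    rw [le_div_iff₀ hn0]
    nlinarith

/-- There is a constant `C = C(M,P,κ)`, not depending on `N`, `k` or `t`,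
such that the characteristic function `f_X^{(N)}(k∣t)` of the interbank debt
`X̄₁ = Σ_{w=2}^N I_{w1} Ω_{w1}` satisfies
`|f_X^{(N)}(k∣t) − exp(Σ_{t'} P(t')κ(t',t)(f_Ω(k∣t',t) − 1))| ≤ C/(N−1)`. -/
theorem stmt4
    (M : ℕ) (hM : 2 ≤ M)
    (P : Fin M → ℝ) (hP0 : ∀ s, 0 ≤ P s) (hP1 : ∑ s, P s = 1)
    (κ : Fin M → Fin M → ℝ) (hκ0 : ∀ s s', 0 ≤ κ s s') :
    ∃ C : ℝ, ∀ (N : ℕ), 2 ≤ N → (∀ s s', κ s s' ≤ (N : ℝ) - 1) →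
    ∀ (ν : Fin M → Fin M → Measure ℝ), (∀ s s', IsProbabilityMeasure (ν s s')) →
    (∀ s s', ν s s' (Set.Iic (0:ℝ)) = 0) →
    ∀ (Ω : Type) (_ : MeasurableSpace Ω) (μ : Measure Ω), IsProbabilityMeasure μ →
    ∀ (t : Fin M) (T : Fin (N - 1) → Ω → Fin M) (U O : Fin (N - 1) → Ω → ℝ),
    -- the triples `(T_w, U_w, Ω_{w1})`, `w = 2,…,N`, are i.i.d. with law `coordLaw`:
    (Measure.map (fun ω => fun w : Fin (N - 1) => (T w ω, U w ω, O w ω)) μ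
      = Measure.pi (fun _ : Fin (N - 1) => coordLaw M P ν t)) →
    ∀ k : ℝ,
    ‖((∫ ω, Complex.exp (Complex.I * (k : ℂ) *
          ((∑ w : Fin (N - 1),
            (if U w ω ≤ κ (T w ω) t / ((N : ℝ) - 1) then (1:ℝ) else 0) * O w ω) : ℝ)) ∂μ)
        - Complex.exp (∑ t' : Fin M, (P t' : ℂ) * (κ t' t : ℂ)
            * ((∫ x, Complex.exp (Complex.I * (k : ℂ) * (x : ℂ)) ∂(ν t' t)) - 1)))‖
      ≤ C / ((N : ℝ) - 1) := by
  
  refine ⟨4 * (∑ s, ∑ s', κ s s')^2 + 4 * (∑ s, ∑ s', κ s s') + 2, ?_⟩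
  intro N hN hκN ν hν _hν0 Ωt mΩ μ hμ t T U O hmap k
  haveI := fun s s' => hν s s'
  have h1N : 1 ≤ N := le_trans one_le_two hN
  have hcast : (((N - 1 : ℕ)) : ℝ) = (N : ℝ) - 1 := by
    push_cast [Nat.cast_sub h1N]; ring
  have hn1 : 1 ≤ N - 1 := by omega
  have hnRpos : (0:ℝ) < (N : ℝ) - 1 := by
    rw [← hcast]; exact_mod_cast hn1
  -- the single-coordinate integrand
  set g : Fin M × ℝ × ℝ → ℂ := fun q => Complex.exp (Complex.I * (k:ℂ) *
    (((if q.2.1 ≤ κ q.1 t / ((N:ℝ) - 1) then (1:ℝ) else 0) * q.2.2 : ℝ) : ℂ)) with hgdef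
  have hgmeas : Measurable g := by
    apply Complex.measurable_exp.comp
    apply Measurable.const_mul
    apply Complex.measurable_ofReal.comp
    exact (Measurable.ite
      (measurableSet_le (measurable_fst.comp measurable_snd)
        ((measurable_of_countable (fun s : Fin M => κ s t / ((N:ℝ) - 1))).comp measurable_fst))
      measurable_const measurable_const).mul (measurable_snd.comp measurable_snd)
  have hgnorm : ∀ q, ‖g q‖ ≤ 1 := fun q => le_of_eq (norm_exp_mul_I _ _)
  -- rewrite the integrand as a product
  have hint : (∫ ω, Complex.exp (Complex.I * (k : ℂ) *
          ((∑ w : Fin (N - 1),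
            (if U w ω ≤ κ (T w ω) t / ((N : ℝ) - 1) then (1:ℝ) else 0) * O w ω) : ℝ)) ∂μ)
      = ∫ ω, ∏ w : Fin (N-1),
          g ((fun ω (w : Fin (N-1)) => (T w ω, U w ω, O w ω)) ω w) ∂μ := by
    apply integral_congr_ae
    apply Filter.Eventually.of_forall
    intro ω
    beta_reduce
    rw [Complex.ofReal_sum, Finset.mul_sum, Complex.exp_sum]
  rw [hint, step1 M P hP0 hP1 ν hν t (N-1) Ωt mΩ μ _ hmap hgmeas hgnorm]
  -- compute the one-coordinate integral
  have hone : (∫ q, g q ∂(coordLaw M P ν t))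
      = ∑ s, (P s : ℂ) * (1 + ((κ s t / ((N:ℝ)-1) : ℝ) : ℂ) *
          ((∫ x, Complex.exp (Complex.I * (k:ℂ) * (x:ℂ)) ∂(ν s t)) - 1)) := by
    rw [integral_coordLaw M P hP0 ν hν t hgmeas hgnorm]
    apply Finset.sum_congr rfl
    intro s _
    congr 1
    exact integral_g_prod (κ s t / ((N:ℝ)-1)) k
      (div_nonneg (hκ0 s t) hnRpos.le) ((div_le_one hnRpos).2 (hκN s t)) (ν s t)
  rw [hone]
  -- apply the analytic estimate
  have hf : ∀ s, ‖∫ x, Complex.exp (Complex.I * (k:ℂ) * (x:ℂ)) ∂(ν s t)‖ ≤ 1 := by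
    intro s
    have := norm_integral_le_of_norm_le_const (μ := ν s t)
      (f := fun x : ℝ => Complex.exp (Complex.I * (k:ℂ) * (x:ℂ))) (C := 1)
      (Filter.Eventually.of_forall fun x => le_of_eq (norm_exp_mul_I k x))
    simpa using this
  have key := analytic M P hP0 hP1 κ hκ0 t (N-1) hn1 (fun s s' => by rw [hcast]; exact hκN s s')
    (fun s => ∫ x, Complex.exp (Complex.I * (k:ℂ) * (x:ℂ)) ∂(ν s t)) hf
  rw [hcast] at key
  exact key
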